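/- Let F = a·∏_{i=1}^n (X − z_i) ∈ ℂ[X] with a ≠ 0 and n = deg F ≥ 2, where z_1,…,z_n are the roots of F listed with multiplicity. Let k be an integer with 1 ≤ k ≤ n, let K ∈ ℝ with K ≥ 1, and let c_1, c_2 ∈ ℝ satisfy c_2·n·ln((1 + 2K)/(2K)) ≥ c_1·n ≥ k/ln(1 + 1/(8K)). Let m ∈ ℂ and r > 0, and assume |z_i − m| < r for 1 ≤ i ≤ k and |z_i − m| ≥ 4·c_2·k·n³·r for k < i ≤ n. Then F^{(k)}(z) ≠ 0 for every z ∈ ℂ with |z − m| < c_2·n²·r. -/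

import Mathlib

open Polynomial Finset


lemma polyDerivProd (z : ℕ → ℂ) (s : Finset ℕ) :
    Polynomial.derivative (∏ i ∈ s, (X - C (z i)))
      = ∑ i ∈ s, ∏ j ∈ s.erase i, (X - C (z j)) := by
  induction s using Finset.induction_on with
  | empty => simp
  | @insert a s ha ih =>
    rw [Finset.prod_insert ha, derivative_mul, ih, Finset.sum_insert ha,
      Finset.erase_insert ha]
    simp only [derivative_sub, derivative_X, derivative_C, sub_zero, one_mul]
    rw [Finset.mul_sum]
    congr 1
    refine Finset.sum_congr rfl fun i hi => ?_
    have hia : i ≠ a := fun h => ha (h ▸ hi)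
    rw [Finset.erase_insert_of_ne hia.symm,
      Finset.prod_insert (fun h => ha (Finset.mem_of_mem_erase h))]

lemma polySumStep (z : ℕ → ℂ) (s : Finset ℕ) (j : ℕ) :
    Polynomial.derivative (∑ S ∈ s.powersetCard (j+1), ∏ i ∈ S, (X - C (z i)))
      = (s.card - j : ℕ) • ∑ S ∈ s.powersetCard j, ∏ i ∈ S, (X - C (z i)) := by
  rw [map_sum]
  simp only [polyDerivProd]
  rw [Finset.smul_sum]
  have hr : ∀ S ∈ s.powersetCard j, ((s.card - j : ℕ) • ∏ i ∈ S, (X - C (z i)))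
      = ∑ _i ∈ s \ S, ∏ i ∈ S, (X - C (z i)) := by
    intro S hS
    rw [Finset.sum_const, Finset.card_sdiff_of_subset (Finset.mem_powersetCard.1 hS).1,
      (Finset.mem_powersetCard.1 hS).2]
  rw [Finset.sum_congr rfl hr]
  rw [Finset.sum_sigma', Finset.sum_sigma']
  refine Finset.sum_nbij' (fun p => (⟨p.1.erase p.2, p.2⟩ : Σ _ : Finset ℕ, ℕ))
    (fun p => (⟨insert p.2 p.1, p.2⟩ : Σ _ : Finset ℕ, ℕ)) ?_ ?_ ?_ ?_ ?_
  · rintro ⟨S, i⟩ hp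
    simp only [Finset.mem_sigma, Finset.mem_powersetCard] at hp ⊢
    obtain ⟨⟨hSs, hSc⟩, hi⟩ := hp
    refine ⟨⟨(Finset.erase_subset _ _).trans hSs, ?_⟩, ?_⟩
    · rw [Finset.card_erase_of_mem hi, hSc]; rfl
    · exact Finset.mem_sdiff.2 ⟨hSs hi, Finset.notMem_erase _ _⟩
  · rintro ⟨u, i⟩ hp
    simp only [Finset.mem_sigma, Finset.mem_powersetCard, Finset.mem_sdiff] at hp ⊢
    obtain ⟨⟨hus, huc⟩, his, hiu⟩ := hp
    exact ⟨⟨Finset.insert_subset his hus, by rw [Finset.card_insert_of_notMem hiu, huc]⟩,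
      Finset.mem_insert_self _ _⟩
  · rintro ⟨S, i⟩ hp
    simp only [Finset.mem_sigma] at hp
    simp [Finset.insert_erase hp.2]
  · rintro ⟨u, i⟩ hp
    simp only [Finset.mem_sigma, Finset.mem_sdiff] at hp
    simp [Finset.erase_insert hp.2.2]
  · rintro ⟨S, i⟩ _
    rfl

lemma polyIterDeriv (z : ℕ → ℂ) (s : Finset ℕ) :
    ∀ k, k ≤ s.card → Polynomial.derivative^[k] (∏ i ∈ s, (X - C (z i)))
      = C (k.factorial : ℂ) *
        ∑ S ∈ s.powersetCard (s.card - k), ∏ i ∈ S, (X - C (z i)) := by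
  intro k
  induction k with
  | zero => simp [Finset.powersetCard_self]
  | succ k ih =>
    intro hk1
    have hk : k ≤ s.card := Nat.le_of_succ_le hk1
    rw [Function.iterate_succ_apply', ih hk, derivative_C_mul]
    have h1 : s.card - k = (s.card - (k+1)) + 1 := by omega
    rw [h1, polySumStep]
    have h2 : s.card - (s.card - (k+1)) = k + 1 := by omega
    rw [h2, nsmul_eq_mul, ← Polynomial.C_eq_natCast, ← mul_assoc, ← Polynomial.C_mul]
    congr 2
    rw [Nat.factorial_succ]
    push_cast
    ring

private lemma onePowAux (x : ℝ) (hx : 0 ≤ x) :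
    ∀ k : ℕ, 2 * k * x ≤ 1 → (1 + x) ^ k ≤ 1 + 2 * k * x := by
  intro k
  induction k with
  | zero => simp
  | succ k ih =>
    intro h1
    have hk : 2 * (k:ℝ) * x ≤ 1 := by
      have : (k:ℝ) ≤ (k:ℝ) + 1 := by linarith
      push_cast at h1
      nlinarith [Nat.cast_nonneg (α := ℝ) k]
    have h2 := ih hk
    have h3 : (1 + x) ^ (k+1) = (1+x)^k * (1+x) := pow_succ _ _
    have h4 : (0:ℝ) ≤ (1+x)^k := by positivity
    push_cast
    push_cast at h1 hk
    nlinarith [Nat.cast_nonneg (α := ℝ) k]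

private lemma powersetSumPow (k : ℕ) (x : ℝ) :
    ∑ A ∈ (Finset.range k).powerset, x ^ A.card = (x + 1) ^ k := by
  have := Finset.prod_add (fun _ : ℕ => x) (fun _ : ℕ => 1) (Finset.range k)
  simp only [Finset.prod_const, one_pow, mul_one, Finset.card_range] at this
  rw [← this]

set_option maxHeartbeats 2000000 in
/-- **Nonvanishing of the `k`-th derivative near a cluster of `k` roots**
(first assertion of the first appendix lemma): if `D(m,r)` is `(1, 4c₂kn³)`-isolating
for the roots `z_1, …, z_k` of `F = a·∏ (X − z_i)`, then `F^{(k)}` has no root in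
`D(m, c₂n²r)`. -/
theorem deriv_ne_zero_near_cluster (n : ℕ) (hn : 2 ≤ n) (a : ℂ) (ha : a ≠ 0) (z : ℕ → ℂ)
    (F : Polynomial ℂ)
    (hF : F = Polynomial.C a * ∏ i ∈ Finset.range n, (Polynomial.X - Polynomial.C (z i)))
    (k : ℕ) (hk1 : 1 ≤ k) (hk : k ≤ n) (K : ℝ) (hK : 1 ≤ K) (c₁ c₂ : ℝ)
    (hc₂ : c₁ * n ≤ c₂ * n * Real.log ((1 + 2 * K) / (2 * K)))
    (hc₁ : (k : ℝ) / Real.log (1 + 1 / (8 * K)) ≤ c₁ * n)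
    (m : ℂ) (r : ℝ) (hr : 0 < r)
    (hin : ∀ i, i < k → ‖z i - m‖ < r)
    (hout : ∀ i, k ≤ i → i < n → 4 * c₂ * k * n ^ 3 * r ≤ ‖z i - m‖) :
    ∀ w : ℂ, ‖w - m‖ < c₂ * n ^ 2 * r →
      (Polynomial.derivative^[k] F).eval w ≠ 0 := by
  intro w hw
  -- ## numeric facts
  have hK0 : (0:ℝ) < K := lt_of_lt_of_le one_pos hK
  have hnR : (2:ℝ) ≤ (n:ℝ) := by exact_mod_cast hn
  have hkR : (1:ℝ) ≤ (k:ℝ) := by exact_mod_cast hk1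
  have hknR : (k:ℝ) ≤ (n:ℝ) := by exact_mod_cast hk
  -- 16 k ≤ c₂ n
  have h16 : 16 * (k:ℝ) ≤ c₂ * n := by
    have h2K : (0:ℝ) < 2 * K := by linarith
    have h8K : (0:ℝ) < 8 * K := by linarith
    have hL2pos : 0 < Real.log ((1 + 2*K)/(2*K)) := by
      apply Real.log_pos
      rw [lt_div_iff₀ h2K]; linarith
    have hL8pos : 0 < Real.log (1 + 1/(8*K)) := by
      apply Real.log_pos
      have : (0:ℝ) < 1/(8*K) := by positivity
      linarith
    have hL2le : Real.log ((1 + 2*K)/(2*K)) ≤ 1/(2*K) := by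
      have h := Real.log_le_sub_one_of_pos (x := (1 + 2*K)/(2*K)) (by positivity)
      have h2 : (1 + 2*K)/(2*K) - 1 = 1/(2*K) := by field_simp; ring
      linarith
    have hL8le : Real.log (1 + 1/(8*K)) ≤ 1/(8*K) := by
      have h := Real.log_le_sub_one_of_pos (x := 1 + 1/(8*K)) (by positivity)
      linarith
    have hc1n : 8 * K * k ≤ c₁ * n := by
      have h1 : (k:ℝ) ≤ (c₁ * n) * Real.log (1 + 1/(8*K)) :=
        (div_le_iff₀ hL8pos).1 hc₁
      have hc1pos : 0 < c₁ * n := by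
        have : (0:ℝ) < (k:ℝ) / Real.log (1 + 1/(8*K)) := by positivity
        linarith
      have h2 : (c₁ * n) * Real.log (1 + 1/(8*K)) ≤ (c₁ * n) * (1/(8*K)) :=
        mul_le_mul_of_nonneg_left hL8le (le_of_lt hc1pos)
      have h3 : (k:ℝ) ≤ (c₁ * n) * (1/(8*K)) := le_trans h1 h2
      rw [mul_one_div, le_div_iff₀ h8K] at h3
      linarith
    have hc2n : 2 * K * (c₁ * n) ≤ c₂ * n := by
      have hc1pos : 0 < c₁ * n := by nlinarith
      have h2 : c₂ * n * Real.log ((1 + 2*K)/(2*K)) ≤ c₂ * n * (1/(2*K)) := by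
        have hc2pos : 0 < c₂ * n := by nlinarith
        exact mul_le_mul_of_nonneg_left hL2le (le_of_lt hc2pos)
      have h3 : c₁ * n ≤ c₂ * n * (1/(2*K)) := le_trans hc₂ h2
      rw [mul_one_div, le_div_iff₀ h2K] at h3
      linarith
    have h4 : 2 * K * (8 * K * k) ≤ 2 * K * (c₁ * n) :=
      mul_le_mul_of_nonneg_left hc1n (by positivity)
    have hK2 : (1:ℝ) ≤ K^2 := by nlinarith
    nlinarith [mul_le_mul_of_nonneg_right hK2 (by linarith : (0:ℝ) ≤ 16 * (k:ℝ))]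
  have hc2pos : 0 < c₂ := by nlinarith
  -- ## the key constants
  obtain ⟨N, hNdef⟩ : ∃ N : ℝ, N = c₂ * n^2 * r + r := ⟨_, rfl⟩
  obtain ⟨M, hMdef⟩ : ∃ M : ℝ, M = 4*c₂*k*n^3*r - c₂*n^2*r := ⟨_, rfl⟩
  have hc2n2 : 16 * (k:ℝ) * n ≤ c₂ * n^2 := by nlinarith
  have hknr2 : (2:ℝ) ≤ (k:ℝ) * n := by nlinarith
  have hcnr : (0:ℝ) < c₂ * (n:ℝ)^2 * r := by positivity
  have hMpos : 0 < M := by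
    rw [hMdef]
    nlinarith [mul_le_mul_of_nonneg_right hknr2 (le_of_lt hcnr)]
  have hNpos : 0 < N := by rw [hNdef]; positivity
  have hratio : 112 * (k:ℝ) * n * N ≤ 33 * M := by
    rw [hNdef, hMdef]
    have e1 : 16*(k:ℝ)*n*r ≤ c₂*n^2*r := mul_le_mul_of_nonneg_right hc2n2 (le_of_lt hr)
    have e2 : 2*(c₂*(n:ℝ)^2*r) ≤ ((k:ℝ)*n)*(c₂*n^2*r) :=
      mul_le_mul_of_nonneg_right hknr2 (le_of_lt hcnr)
    nlinarith [e1, e2, mul_le_mul_of_nonneg_right e1 (by positivity : (0:ℝ) ≤ c₂ * (n:ℝ)^2)]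
  obtain ⟨ρ, hρdef⟩ : ∃ x : ℝ, x = N / M := ⟨_, rfl⟩
  have hρ : 0 ≤ ρ := by rw [hρdef]; exact le_of_lt (div_pos hNpos hMpos)
  have hknρ : (k:ℝ) * n * ρ ≤ 33/112 := by
    have h1 : (k:ℝ) * n * ρ = ((k:ℝ) * n * N) / M := by rw [hρdef]; ring
    rw [h1, div_le_div_iff₀ hMpos (by norm_num : (0:ℝ) < 112)]
    linarith
  have hx1 : 2 * (k:ℝ) * ((n:ℝ) * ρ) ≤ 33/56 := by nlinarith
  have hx2 : 2 * (k:ℝ) * ((n:ℝ) * ρ) ≤ 1 := by linarith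
  have hxnn : 0 ≤ (n:ℝ) * ρ := by positivity
  -- ## distance bounds
  have hnear : ∀ i, i < k → ‖w - z i‖ ≤ N := by
    intro i hi
    have h1 : ‖z i - m‖ < r := hin i hi
    have h2 : w - z i = (w - m) + (m - z i) := by ring
    rw [hNdef]
    calc ‖w - z i‖ ≤ ‖w - m‖ + ‖m - z i‖ := by
          rw [h2]; exact norm_add_le _ _
      _ ≤ c₂ * n^2 * r + r := by
          rw [norm_sub_rev m (z i)]
          exact add_le_add (le_of_lt hw) (le_of_lt h1)
  have hfar : ∀ i, k ≤ i → i < n → M ≤ ‖w - z i‖ := by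
    intro i hik hin'
    have h1 := hout i hik hin'
    have h2 : z i - m = (z i - w) + (w - m) := by ring
    have h3 : ‖z i - m‖ ≤ ‖z i - w‖ + ‖w - m‖ := by
      rw [h2]; exact norm_add_le _ _
    rw [norm_sub_rev (z i) w] at h3
    rw [hMdef]
    linarith
  -- ## setting up the sum over subsets
  have hS₀card : (Finset.Ico k n).card = n - k := Nat.card_Ico k n
  have hS₀mem : Finset.Ico k n ∈ (Finset.range n).powersetCard (n - k) := by
    rw [Finset.mem_powersetCard]
    refine ⟨fun i hi => ?_, hS₀card⟩
    rw [Finset.mem_Ico] at hi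
    exact Finset.mem_range.2 hi.2
  have hT0pos : 0 < ‖∏ i ∈ Finset.Ico k n, (w - z i)‖ := by
    rw [norm_prod]
    refine Finset.prod_pos fun i hi => ?_
    rw [Finset.mem_Ico] at hi
    exact lt_of_lt_of_le hMpos (hfar i hi.1 hi.2)
  -- ## per-term bound
  have hterm : ∀ S ∈ (Finset.range n).powersetCard (n - k),
      ‖∏ i ∈ S, (w - z i)‖ ≤
        ρ ^ (S.filter (· < k)).card * ‖∏ i ∈ Finset.Ico k n, (w - z i)‖ := by
    intro S hS
    obtain ⟨hSsub, hScard⟩ := Finset.mem_powersetCard.1 hS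
    have hABcard : (S.filter (· < k)).card + (S.filter (fun i => ¬ i < k)).card = n - k := by
      rw [Finset.card_filter_add_card_filter_not, hScard]
    have hBsub : S.filter (fun i => ¬ i < k) ⊆ Finset.Ico k n := by
      intro i hi
      rw [Finset.mem_filter] at hi
      rw [Finset.mem_Ico]
      exact ⟨Nat.le_of_not_lt hi.2, Finset.mem_range.1 (hSsub hi.1)⟩
    have hB0 : (Finset.Ico k n \ S.filter (fun i => ¬ i < k)).card = (S.filter (· < k)).card := by
      rw [Finset.card_sdiff_of_subset hBsub, hS₀card]
      omega
    have h1 : ‖∏ i ∈ S, (w - z i)‖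
        = (∏ i ∈ S.filter (· < k), ‖w - z i‖) *
            ∏ i ∈ S.filter (fun i => ¬ i < k), ‖w - z i‖ := by
      rw [← Finset.prod_filter_mul_prod_filter_not S (· < k), norm_mul, norm_prod, norm_prod]
    have h2 : ‖∏ i ∈ Finset.Ico k n, (w - z i)‖
        = (∏ i ∈ Finset.Ico k n \ S.filter (fun i => ¬ i < k), ‖w - z i‖) *
            ∏ i ∈ S.filter (fun i => ¬ i < k), ‖w - z i‖ := by
      rw [← Finset.prod_sdiff hBsub, norm_mul, norm_prod, norm_prod]
    have hA_le : ∏ i ∈ S.filter (· < k), ‖w - z i‖ ≤ N ^ (S.filter (· < k)).card := by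
      rw [← Finset.prod_const]
      refine Finset.prod_le_prod (fun i _ => norm_nonneg _) fun i hi => ?_
      rw [Finset.mem_filter] at hi
      exact hnear i hi.2
    have hM_le : M ^ (S.filter (· < k)).card
        ≤ ∏ i ∈ Finset.Ico k n \ S.filter (fun i => ¬ i < k), ‖w - z i‖ := by
      rw [← hB0, ← Finset.prod_const]
      refine Finset.prod_le_prod (fun i _ => le_of_lt hMpos) fun i hi => ?_
      have hi' := Finset.mem_sdiff.1 hi
      rw [Finset.mem_Ico] at hi'
      exact hfar i hi'.1.1 hi'.1.2
    have hBnn : 0 ≤ ∏ i ∈ S.filter (fun i => ¬ i < k), ‖w - z i‖ :=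
      Finset.prod_nonneg fun i _ => norm_nonneg _
    have hMt : (0:ℝ) < M ^ (S.filter (· < k)).card := pow_pos hMpos _
    rw [hρdef, div_pow, div_mul_eq_mul_div, le_div_iff₀ hMt]
    calc ‖∏ i ∈ S, (w - z i)‖ * M ^ (S.filter (· < k)).card
        = ((∏ i ∈ S.filter (· < k), ‖w - z i‖) *
            ∏ i ∈ S.filter (fun i => ¬ i < k), ‖w - z i‖) *
              M ^ (S.filter (· < k)).card := by rw [h1]
      _ ≤ (N ^ (S.filter (· < k)).card *
            ∏ i ∈ S.filter (fun i => ¬ i < k), ‖w - z i‖) *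
              M ^ (S.filter (· < k)).card := by
          exact mul_le_mul_of_nonneg_right (mul_le_mul_of_nonneg_right hA_le hBnn) (le_of_lt hMt)
      _ = N ^ (S.filter (· < k)).card * (M ^ (S.filter (· < k)).card *
            ∏ i ∈ S.filter (fun i => ¬ i < k), ‖w - z i‖) := by ring
      _ ≤ N ^ (S.filter (· < k)).card *
            ((∏ i ∈ Finset.Ico k n \ S.filter (fun i => ¬ i < k), ‖w - z i‖) *
              ∏ i ∈ S.filter (fun i => ¬ i < k), ‖w - z i‖) := by
          exact mul_le_mul_of_nonneg_left (mul_le_mul_of_nonneg_right hM_le hBnn)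
            (le_of_lt (pow_pos hNpos _))
      _ = N ^ (S.filter (· < k)).card * ‖∏ i ∈ Finset.Ico k n, (w - z i)‖ := by
          rw [h2]
  -- ## fiber-sum bound
  have hsum : ∑ S ∈ ((Finset.range n).powersetCard (n - k)).erase (Finset.Ico k n),
      ρ ^ (S.filter (· < k)).card ≤ 2 * (k:ℝ) * ((n:ℝ) * ρ) := by
    have hmaps : ∀ S ∈ ((Finset.range n).powersetCard (n - k)).erase (Finset.Ico k n),
        S.filter (· < k) ∈ (Finset.range k).powerset := by
      intro S _
      rw [Finset.mem_powerset]
      intro i hi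
      rw [Finset.mem_filter] at hi
      exact Finset.mem_range.2 hi.2
    rw [← Finset.sum_fiberwise_of_maps_to hmaps (fun S => ρ ^ (S.filter (· < k)).card)]
    have hper : ∀ A ∈ (Finset.range k).powerset,
        (∑ S ∈ (((Finset.range n).powersetCard (n - k)).erase (Finset.Ico k n)).filter
            (fun S => S.filter (· < k) = A), ρ ^ (S.filter (· < k)).card)
          ≤ (if A = ∅ then 0 else ((n:ℝ) * ρ) ^ A.card) := by
      intro A _
      by_cases hAe : A = ∅
      · rw [if_pos hAe]
        have hemp : (((Finset.range n).powersetCard (n - k)).erase (Finset.Ico k n)).filter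
            (fun S => S.filter (· < k) = A) = ∅ := by
          rw [Finset.filter_eq_empty_iff]
          intro S hS
          rw [Finset.mem_erase] at hS
          obtain ⟨hSne, hSP⟩ := hS
          obtain ⟨hSsub, hScard⟩ := Finset.mem_powersetCard.1 hSP
          intro hfe
          apply hSne
          have hsub : S ⊆ Finset.Ico k n := by
            intro i hi
            rw [Finset.mem_Ico]
            refine ⟨?_, Finset.mem_range.1 (hSsub hi)⟩
            by_contra hik
            have hmem : i ∈ S.filter (· < k) :=
              Finset.mem_filter.2 ⟨hi, Nat.lt_of_not_le hik⟩
            rw [hfe, hAe] at hmem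
            exact absurd hmem (Finset.notMem_empty i)
          exact Finset.eq_of_subset_of_card_le hsub (by rw [hScard, hS₀card])
        rw [hemp, Finset.sum_empty]
      · rw [if_neg hAe]
        have hfib : ∀ S ∈ (((Finset.range n).powersetCard (n - k)).erase (Finset.Ico k n)).filter
            (fun S => S.filter (· < k) = A),
            ρ ^ (S.filter (· < k)).card = ρ ^ A.card := by
          intro S hS
          rw [(Finset.mem_filter.1 hS).2]
        rw [Finset.sum_congr rfl hfib, Finset.sum_const, nsmul_eq_mul]
        have hcard : ((((Finset.range n).powersetCard (n - k)).erase (Finset.Ico k n)).filter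
            (fun S => S.filter (· < k) = A)).card
            ≤ ((Finset.Ico k n).powersetCard (n - k - A.card)).card := by
          refine Finset.card_le_card_of_injOn (fun S => S.filter (fun i => ¬ i < k)) ?_ ?_
          · intro S hS
            show S.filter (fun i => ¬ i < k) ∈ (Finset.Ico k n).powersetCard (n - k - A.card)
            rw [Finset.mem_coe, Finset.mem_filter, Finset.mem_erase] at hS
            obtain ⟨⟨_, hSP⟩, hfe⟩ := hS
            obtain ⟨hSsub, hScard⟩ := Finset.mem_powersetCard.1 hSP
            rw [Finset.mem_powersetCard]
            constructor
            · intro i hi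
              rw [Finset.mem_filter] at hi
              rw [Finset.mem_Ico]
              exact ⟨Nat.le_of_not_lt hi.2, Finset.mem_range.1 (hSsub hi.1)⟩
            · have h5 : (S.filter (· < k)).card + (S.filter (fun i => ¬ i < k)).card = n - k := by
                rw [Finset.card_filter_add_card_filter_not, hScard]
              rw [hfe] at h5
              omega
          · intro S hS S' hS' hSS
            have hSS' : S.filter (fun i => ¬ i < k) = S'.filter (fun i => ¬ i < k) := hSS
            simp only [Finset.coe_filter, Set.mem_setOf_eq] at hS hS'
            have e : S = S.filter (· < k) ∪ S.filter (fun i => ¬ i < k) :=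
              (Finset.filter_union_filter_not_eq _ S).symm
            have e' : S' = S'.filter (· < k) ∪ S'.filter (fun i => ¬ i < k) :=
              (Finset.filter_union_filter_not_eq _ S').symm
            rw [e, e', hS.2, hS'.2, hSS']
        have hchoose : (((Finset.Ico k n).powersetCard (n - k - A.card)).card : ℝ)
            ≤ (n:ℝ) ^ A.card := by
          rw [Finset.card_powersetCard, hS₀card]
          by_cases hA2 : A.card ≤ n - k
          · rw [Nat.choose_symm hA2]
            have hh := Nat.choose_le_pow_div (α := ℝ) A.card (n - k)
            have hf1 : (1:ℝ) ≤ (A.card).factorial := by exact_mod_cast (A.card).factorial_pos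
            have hd : ((n - k:ℕ):ℝ) ^ A.card / (A.card).factorial ≤ ((n - k:ℕ):ℝ) ^ A.card := by
              apply div_le_self (by positivity) hf1
            have hnk : ((n - k:ℕ):ℝ) ≤ (n:ℝ) := by
              exact_mod_cast Nat.cast_le.2 (Nat.sub_le n k)
            calc (((n - k).choose A.card : ℕ):ℝ) ≤ ((n - k:ℕ):ℝ) ^ A.card / (A.card).factorial := hh
              _ ≤ ((n - k:ℕ):ℝ) ^ A.card := hd
              _ ≤ (n:ℝ) ^ A.card := pow_le_pow_left₀ (by positivity) hnk _
          · have h0 : n - k - A.card = 0 := by omega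
            rw [h0, Nat.choose_zero_right]
            calc ((1:ℕ):ℝ) = (1:ℝ)^A.card := by norm_num
              _ ≤ (n:ℝ) ^ A.card := pow_le_pow_left₀ one_pos.le (by linarith) _
        calc ((((Finset.range n).powersetCard (n - k)).erase (Finset.Ico k n)).filter
              (fun S => S.filter (· < k) = A)).card * ρ ^ A.card
            ≤ (n:ℝ) ^ A.card * ρ ^ A.card := by
              refine mul_le_mul_of_nonneg_right ?_ (pow_nonneg hρ _)
              exact le_trans (by exact_mod_cast hcard) hchoose
          _ = ((n:ℝ) * ρ) ^ A.card := (mul_pow _ _ _).symm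
    calc (∑ A ∈ (Finset.range k).powerset,
          ∑ S ∈ (((Finset.range n).powersetCard (n - k)).erase (Finset.Ico k n)).filter
            (fun S => S.filter (· < k) = A), ρ ^ (S.filter (· < k)).card)
        ≤ ∑ A ∈ (Finset.range k).powerset, (if A = ∅ then 0 else ((n:ℝ) * ρ) ^ A.card) :=
          Finset.sum_le_sum hper
      _ ≤ 2 * (k:ℝ) * ((n:ℝ) * ρ) := by
          have hsplit2 := Finset.add_sum_erase ((Finset.range k).powerset)
            (fun A => ((n:ℝ) * ρ) ^ A.card) (Finset.empty_mem_powerset _)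
          have hid := powersetSumPow k ((n:ℝ) * ρ)
          rw [← Finset.insert_erase (Finset.empty_mem_powerset (Finset.range k)),
            Finset.sum_insert (Finset.notMem_erase _ _), if_pos rfl, zero_add]
          have hco : ∀ A ∈ ((Finset.range k).powerset).erase ∅,
              (if A = ∅ then (0:ℝ) else ((n:ℝ) * ρ) ^ A.card) = ((n:ℝ) * ρ) ^ A.card := by
            intro A hA
            rw [if_neg (Finset.mem_erase.1 hA).1]
          rw [Finset.sum_congr rfl hco]
          have hub := onePowAux ((n:ℝ) * ρ) hxnn k hx2
          simp only [Finset.card_empty, pow_zero] at hsplit2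
          rw [hid] at hsplit2
          have hub' : ((n:ℝ) * ρ + 1) ^ k ≤ 1 + 2 * (k:ℝ) * ((n:ℝ) * ρ) := by
            rw [add_comm ((n:ℝ) * ρ) 1]; exact hub
          linarith
  -- ## conclusion
  have hcr : (Finset.range n).card = n := Finset.card_range n
  have hiter := polyIterDeriv z (Finset.range n) k (by rw [hcr]; exact hk)
  rw [hcr] at hiter
  rw [hF, Polynomial.iterate_derivative_C_mul, hiter]
  simp only [eval_mul, eval_C, eval_finset_sum, eval_prod, eval_sub, eval_X]
  intro h0
  have hfac : ((k.factorial : ℂ)) ≠ 0 := by exact_mod_cast k.factorial_ne_zero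
  have hSig : ∑ S ∈ (Finset.range n).powersetCard (n - k), ∏ i ∈ S, (w - z i) = 0 := by
    rcases mul_eq_zero.1 h0 with h | h
    · exact absurd h ha
    rcases mul_eq_zero.1 h with h | h
    · exact absurd h hfac
    · exact h
  have hsplit : (∏ i ∈ Finset.Ico k n, (w - z i)) +
      ∑ S ∈ ((Finset.range n).powersetCard (n - k)).erase (Finset.Ico k n),
        ∏ i ∈ S, (w - z i)
      = ∑ S ∈ (Finset.range n).powersetCard (n - k), ∏ i ∈ S, (w - z i) :=
    Finset.add_sum_erase _ (fun S => ∏ i ∈ S, (w - z i)) hS₀mem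
  rw [hSig] at hsplit
  have hTS₀ : (∏ i ∈ Finset.Ico k n, (w - z i)) =
      - ∑ S ∈ ((Finset.range n).powersetCard (n - k)).erase (Finset.Ico k n),
        ∏ i ∈ S, (w - z i) :=
    eq_neg_of_add_eq_zero_left hsplit
  have habs : ‖∏ i ∈ Finset.Ico k n, (w - z i)‖
      ≤ ∑ S ∈ ((Finset.range n).powersetCard (n - k)).erase (Finset.Ico k n),
          ‖∏ i ∈ S, (w - z i)‖ := by
    rw [hTS₀, norm_neg]
    exact norm_sum_le _ _
  have hchain : ∑ S ∈ ((Finset.range n).powersetCard (n - k)).erase (Finset.Ico k n),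
      ‖∏ i ∈ S, (w - z i)‖
      ≤ (2 * (k:ℝ) * ((n:ℝ) * ρ)) * ‖∏ i ∈ Finset.Ico k n, (w - z i)‖ := by
    calc ∑ S ∈ ((Finset.range n).powersetCard (n - k)).erase (Finset.Ico k n),
          ‖∏ i ∈ S, (w - z i)‖
        ≤ ∑ S ∈ ((Finset.range n).powersetCard (n - k)).erase (Finset.Ico k n),
            ρ ^ (S.filter (· < k)).card * ‖∏ i ∈ Finset.Ico k n, (w - z i)‖ :=
          Finset.sum_le_sum fun S hS => hterm S (Finset.mem_of_mem_erase hS)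
      _ = (∑ S ∈ ((Finset.range n).powersetCard (n - k)).erase (Finset.Ico k n),
            ρ ^ (S.filter (· < k)).card) * ‖∏ i ∈ Finset.Ico k n, (w - z i)‖ := by
          rw [Finset.sum_mul]
      _ ≤ (2 * (k:ℝ) * ((n:ℝ) * ρ)) * ‖∏ i ∈ Finset.Ico k n, (w - z i)‖ :=
          mul_le_mul_of_nonneg_right hsum (le_of_lt hT0pos)
  have hfin : (2 * (k:ℝ) * ((n:ℝ) * ρ)) * ‖∏ i ∈ Finset.Ico k n, (w - z i)‖
      ≤ (33/56) * ‖∏ i ∈ Finset.Ico k n, (w - z i)‖ :=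
    mul_le_mul_of_nonneg_right hx1 (le_of_lt hT0pos)
  linarith
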